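/- Let t ≥ 1, k ≥ 2t+2, and let ℓ satisfy 1 ≤ ℓ < t. Then for sufficiently large n, with m = |EM(n,k,t+2,t+1)|, the ℓ-th shadow of EM(n,k,t+2,t+1) is strictly smaller than the ℓ-th shadow of the first m sets of EM(n,k,t,t) in colex order: |∂_ℓ EM(n,k,t+2,t+1)| < |∂_ℓ L_m EM(n,k,t,t)|. -/

import Mathlib

open Finset

/-- `EM n k s t` is the family of `k`-subsets `A` of `[n] = {1,…,n}` with `|A ∩ [s]| ≥ t`. -/
def EM (n k s t : ℕ) : Finset (Finset ℕ) :=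
  ((Finset.Icc 1 n).powersetCard k).filter fun A => t ≤ (A ∩ Finset.Icc 1 s).card

/-- `IsInitSeg F G m` : `G` consists of the first `m` elements of `F` in colex order. -/
def IsInitSeg (F G : Finset (Finset ℕ)) (m : ℕ) : Prop :=
  G ⊆ F ∧ G.card = m ∧
    ∀ A ∈ G, ∀ B ∈ F, toColex B ≤ toColex A → B ∈ G

private lemma choose_mono_half (M : ℕ) :
    ∀ b a, a ≤ b → 2 * b ≤ M → Nat.choose M a ≤ Nat.choose M b := by
  intro b
  induction b with
  | zero => intro a ha _; interval_cases a; rfl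
  | succ b ih =>
    intro a ha hb
    rcases Nat.eq_or_lt_of_le ha with h | h
    · subst h; rfl
    · exact le_trans (ih a (by omega) (by omega))
        (Nat.choose_le_succ_of_lt_half_left (by omega))

/-- The key coefficient inequality `C(t+2, ℓ+1) < (t+2)·C(t, ℓ)` for `1 ≤ ℓ < t`. -/
private lemma coeff_lt (t ℓ : ℕ) (hℓ1 : 1 ≤ ℓ) (hℓt : ℓ < t) :
    Nat.choose (t + 2) (ℓ + 1) < (t + 2) * Nat.choose t ℓ := by
  have h1 : (t + 2) * Nat.choose (t + 1) ℓ = Nat.choose (t + 2) (ℓ + 1) * (ℓ + 1) :=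
    Nat.add_one_mul_choose_eq (t + 1) ℓ
  have h2 : Nat.choose t ℓ * (t + 1) = Nat.choose (t + 1) ℓ * (t + 1 - ℓ) :=
    Nat.choose_mul_succ_eq t ℓ
  have hpos : 0 < Nat.choose t ℓ := Nat.choose_pos (le_of_lt hℓt)
  obtain ⟨a, ha⟩ : ∃ a, t + 1 - ℓ = a + 2 := ⟨t - 1 - ℓ, by omega⟩
  have hta : t + 1 = ℓ + a + 2 := by omega
  rw [ha] at h2
  refine Nat.lt_of_mul_lt_mul_right (a := (ℓ + 1) * (a + 2)) ?_
  have key : Nat.choose t ℓ * (t + 1) < Nat.choose t ℓ * ((ℓ + 1) * (a + 2)) := by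
    have hlt : t + 1 < (ℓ + 1) * (a + 2) := by nlinarith
    exact mul_lt_mul_of_pos_left hlt hpos
  calc Nat.choose (t + 2) (ℓ + 1) * ((ℓ + 1) * (a + 2))
      = (Nat.choose (t + 2) (ℓ + 1) * (ℓ + 1)) * (a + 2) := by ring
    _ = (t + 2) * (Nat.choose (t + 1) ℓ * (a + 2)) := by rw [← h1]; ring
    _ = (t + 2) * (Nat.choose t ℓ * (t + 1)) := by rw [h2]
    _ < (t + 2) * (Nat.choose t ℓ * ((ℓ + 1) * (a + 2))) :=
        mul_lt_mul_of_pos_left key (by omega)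
    _ = (t + 2) * Nat.choose t ℓ * ((ℓ + 1) * (a + 2)) := by ring

/-- Lower bound on the iterated shadow of a family all of whose members are `k`-sets
containing `[t]`. -/
private lemma shadow_lower (k t ℓ : ℕ) (hℓt : ℓ ≤ t) (htk : t ≤ k)
    (G : Finset (Finset ℕ)) (hG : ∀ A ∈ G, A.card = k ∧ Finset.Icc 1 t ⊆ A) :
    G.card * Nat.choose t ℓ ≤ (Finset.shadow^[ℓ] G).card := by
  classical
  have hcardIcc : (Finset.Icc 1 t).card = t := by rw [Nat.card_Icc]; omega
  have hdom : (G ×ˢ (Finset.Icc 1 t).powersetCard ℓ).card = G.card * Nat.choose t ℓ := by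
    rw [card_product, card_powersetCard, hcardIcc]
  rw [← hdom]
  apply Finset.card_le_card_of_injOn (fun p => p.1 \ p.2)
  · rintro ⟨A, R⟩ hp
    rw [mem_coe, mem_product] at hp
    obtain ⟨hA, hR⟩ := hp
    rw [mem_powersetCard] at hR
    obtain ⟨hRsub, hRcard⟩ := hR
    obtain ⟨-, hAt⟩ := hG A hA
    have hRA : R ⊆ A := hRsub.trans hAt
    rw [mem_coe, Finset.mem_shadow_iterate_iff_exists_sdiff]
    refine ⟨A, hA, sdiff_subset, ?_⟩
    rw [sdiff_sdiff_self_left, inter_eq_right.mpr hRA, hRcard]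
  · rintro ⟨A, R⟩ hp ⟨A', R'⟩ hp' heq
    simp only [coe_product, Set.mem_prod, mem_coe] at hp hp'
    obtain ⟨hA, hR⟩ := hp
    obtain ⟨hA', hR'⟩ := hp'
    rw [mem_powersetCard] at hR hR'
    obtain ⟨-, hAt⟩ := hG A hA
    obtain ⟨-, hAt'⟩ := hG A' hA'
    have hRA : R ⊆ A := hR.1.trans hAt
    have hRA' : R' ⊆ A' := hR'.1.trans hAt'
    simp only at heq
    have hint : (A \ R) ∩ Finset.Icc 1 t = Finset.Icc 1 t \ R := by
      ext x; simp only [mem_inter, mem_sdiff, mem_Icc]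
      constructor
      · rintro ⟨⟨-, hx2⟩, hx3⟩; exact ⟨hx3, hx2⟩
      · rintro ⟨hx1, hx2⟩; exact ⟨⟨hAt (by simpa using hx1), hx2⟩, by simpa using hx1⟩
    have hint' : (A' \ R') ∩ Finset.Icc 1 t = Finset.Icc 1 t \ R' := by
      ext x; simp only [mem_inter, mem_sdiff, mem_Icc]
      constructor
      · rintro ⟨⟨-, hx2⟩, hx3⟩; exact ⟨hx3, hx2⟩
      · rintro ⟨hx1, hx2⟩; exact ⟨⟨hAt' (by simpa using hx1), hx2⟩, by simpa using hx1⟩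
    have hRR : R = R' := by
      have h1 : Finset.Icc 1 t \ R = Finset.Icc 1 t \ R' := by
        rw [← hint, ← hint', heq]
      have := congrArg (fun s => Finset.Icc 1 t \ s) h1
      simpa [sdiff_sdiff_right_self, inter_eq_right.mpr hR.1,
        inter_eq_right.mpr hR'.1] using this
    have hAA : A = A' := by
      have h1 : A \ R ∪ R = A' \ R' ∪ R' := by rw [heq, hRR]
      rwa [sdiff_union_of_subset hRA, sdiff_union_of_subset hRA'] at h1
    simp [hRR, hAA]

/-- Lower bound on the size of `EM n k (t+2) (t+1)`. -/
private lemma m_lower (n k t : ℕ) (hk : t + 1 ≤ k) (hn : t + 2 ≤ n) (hkn : k ≤ n) :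
    (t + 2) * Nat.choose (n - t - 2) (k - t - 1) ≤ (EM n k (t + 2) (t + 1)).card := by
  classical
  set X := Finset.Icc 1 (t + 2) with hX
  have hXcard : X.card = t + 2 := by rw [hX, Nat.card_Icc]; omega
  have hYcard : (Finset.Icc (t + 3) n).card = n - t - 2 := by rw [Nat.card_Icc]; omega
  have hdom : (X ×ˢ (Finset.Icc (t + 3) n).powersetCard (k - t - 1)).card
      = (t + 2) * Nat.choose (n - t - 2) (k - t - 1) := by
    rw [card_product, card_powersetCard, hXcard, hYcard]
  rw [← hdom]
  apply Finset.card_le_card_of_injOn (fun p => X.erase p.1 ∪ p.2)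
  · rintro ⟨i, S⟩ hp
    rw [mem_coe, mem_product] at hp
    obtain ⟨hi, hS⟩ := hp
    rw [mem_powersetCard] at hS
    obtain ⟨hSsub, hScard⟩ := hS
    have hdisj : Disjoint (X.erase i) S := by
      refine Finset.disjoint_left.mpr fun x hx hx' => ?_
      have h1 := Finset.mem_of_mem_erase hx
      have h2 := hSsub hx'
      rw [hX, mem_Icc] at h1
      rw [mem_Icc] at h2
      omega
    have hiX : i ∈ X := hi
    have hecard : (X.erase i).card = t + 1 := by rw [card_erase_of_mem hiX, hXcard]; omega
    have hucard : (X.erase i ∪ S).card = k := by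
      rw [card_union_of_disjoint hdisj, hecard, hScard]; omega
    have hinter : (X.erase i ∪ S) ∩ X = X.erase i := by
      rw [union_inter_distrib_right]
      have h1 : X.erase i ∩ X = X.erase i := inter_eq_left.mpr (erase_subset _ _)
      have h2 : S ∩ X = ∅ := by
        refine Finset.eq_empty_of_forall_notMem fun x hx => ?_
        rw [mem_inter] at hx
        have h3 := hSsub hx.1
        rw [mem_Icc] at h3
        rw [hX, mem_Icc] at hx
        omega
      rw [h1, h2, union_empty]
    rw [mem_coe, EM, mem_filter, mem_powersetCard]
    refine ⟨⟨?_, hucard⟩, ?_⟩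
    · apply union_subset
      · exact (erase_subset _ _).trans (by rw [hX]; exact Finset.Icc_subset_Icc_right (by omega))
      · exact hSsub.trans (Finset.Icc_subset_Icc_left (by omega))
    · rw [← hX, hinter, hecard]
  · rintro ⟨i, S⟩ hp ⟨i', S'⟩ hp' heq
    simp only [coe_product, Set.mem_prod, mem_coe] at hp hp'
    obtain ⟨hi, hS⟩ := hp
    obtain ⟨hi', hS'⟩ := hp'
    rw [mem_powersetCard] at hS hS'
    simp only at heq
    have hSX : ∀ (T : Finset ℕ), T ⊆ Finset.Icc (t + 3) n → T ∩ X = ∅ := by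
      intro T hT
      refine Finset.eq_empty_of_forall_notMem fun x hx => ?_
      rw [mem_inter] at hx
      have h3 := hT hx.1
      rw [mem_Icc] at h3
      rw [hX, mem_Icc] at hx
      omega
    have hinter : ∀ (j : ℕ) (T : Finset ℕ), j ∈ X → T ⊆ Finset.Icc (t + 3) n →
        (X.erase j ∪ T) ∩ X = X.erase j := by
      intro j T hj hT
      rw [union_inter_distrib_right, inter_eq_left.mpr (erase_subset _ _), hSX T hT, union_empty]
    have he : X.erase i = X.erase i' := by
      rw [← hinter i S hi hS.1, ← hinter i' S' hi' hS'.1, heq]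
    have hii : i = i' := by
      by_contra hne
      have : i' ∈ X.erase i := Finset.mem_erase.mpr ⟨fun h => hne h.symm, hi'⟩
      rw [he] at this
      exact (Finset.mem_erase.mp this).1 rfl
    have hSdiff : ∀ (j : ℕ) (T : Finset ℕ), T ⊆ Finset.Icc (t + 3) n →
        (X.erase j ∪ T) \ X = T := by
      intro j T hT
      rw [union_sdiff_distrib, sdiff_eq_empty_iff_subset.mpr (erase_subset _ _), empty_union]
      rw [Finset.sdiff_eq_self_iff_disjoint]
      exact Finset.disjoint_left.mpr fun x hx hx' => by
        have := hT hx; rw [mem_Icc] at this; rw [hX, mem_Icc] at hx'; omega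
    have hSS : S = S' := by
      rw [← hSdiff i S hS.1, ← hSdiff i' S' hS'.1, heq]
    simp [hii, hSS]

/-- Upper bound on the iterated shadow of `EM n k (t+2) (t+1)`. -/
private lemma shadow_upper (n k t ℓ : ℕ) (hℓk : ℓ ≤ k) (hℓt : ℓ ≤ t) (hk : 2 * t + 2 ≤ k)
    (hn : 2 * (k - t - 2) ≤ n - t - 2) :
    (Finset.shadow^[ℓ] (EM n k (t + 2) (t + 1))).card ≤
      Nat.choose (t + 2) (t + 1 - ℓ) * Nat.choose (n - t - 2) (k - t - 1)
        + 2 ^ (t + 2) * Nat.choose (n - t - 2) (k - t - 2) := by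
  classical
  set X := Finset.Icc 1 (t + 2) with hX
  have hXcard : X.card = t + 2 := by rw [hX, Nat.card_Icc]; omega
  have hYcard : (Finset.Icc (t + 3) n).card = n - t - 2 := by rw [Nat.card_Icc]; omega
  -- Every member of the iterated shadow lies in this filtered set
  set T : Finset (Finset ℕ) :=
    ((Finset.Icc 1 n).powersetCard (k - ℓ)).filter fun B => t + 1 - ℓ ≤ (B ∩ X).card with hT
  have hsub : Finset.shadow^[ℓ] (EM n k (t + 2) (t + 1)) ⊆ T := by
    intro B hB
    rw [Finset.mem_shadow_iterate_iff_exists_sdiff] at hB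
    obtain ⟨A, hA, hBA, hcard⟩ := hB
    rw [EM, mem_filter, mem_powersetCard] at hA
    obtain ⟨⟨hAsub, hAcard⟩, hAint⟩ := hA
    have hBcard : B.card = k - ℓ := by
      have := Finset.card_sdiff_add_card_eq_card hBA
      omega
    rw [hT, mem_filter, mem_powersetCard]
    refine ⟨⟨hBA.trans hAsub, hBcard⟩, ?_⟩
    have h1 : A ∩ X ⊆ (B ∩ X) ∪ (A \ B) := by
      intro x hx
      rw [mem_inter] at hx
      by_cases hxB : x ∈ B
      · exact Finset.mem_union_left _ (mem_inter.mpr ⟨hxB, hx.2⟩)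
      · exact Finset.mem_union_right _ (mem_sdiff.mpr ⟨hx.1, hxB⟩)
    have h2 := (Finset.card_le_card h1).trans (Finset.card_union_le _ _)
    rw [hX] at *
    omega
  refine (Finset.card_le_card hsub).trans ?_
  -- split T by whether the intersection card is exactly t+1-ℓ
  have hsplit := Finset.card_filter_add_card_filter_not
    (s := T) (p := fun B => (B ∩ X).card = t + 1 - ℓ)
  rw [← hsplit]
  gcongr
  -- exact part
  · set Teq := T.filter fun B => (B ∩ X).card = t + 1 - ℓ with hTeq
    have : Teq.card ≤ ((X.powersetCard (t + 1 - ℓ)) ×ˢ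
        ((Finset.Icc (t + 3) n).powersetCard (k - t - 1))).card := by
      apply Finset.card_le_card_of_injOn (fun B => (B ∩ X, B \ X))
      · intro B hB
        rw [mem_coe, hTeq, mem_filter, hT, mem_filter, mem_powersetCard] at hB
        obtain ⟨⟨⟨hBsub, hBcard⟩, -⟩, hBeq⟩ := hB
        rw [mem_coe, mem_product, mem_powersetCard, mem_powersetCard]
        refine ⟨⟨inter_subset_right, hBeq⟩, ?_, ?_⟩
        · intro x hx
          rw [mem_sdiff] at hx
          have h1 := hBsub hx.1
          rw [mem_Icc] at h1 ⊢
          have h2 : x ∉ Finset.Icc 1 (t + 2) := hx.2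
          rw [mem_Icc] at h2
          omega
        · show (B \ X).card = k - t - 1
          have hsum := Finset.card_sdiff_add_card_inter B X
          omega
      · intro B hB B' hB' heq
        simp only [Prod.mk.injEq] at heq
        have h1 : B = (B ∩ X) ∪ (B \ X) := by
          ext x; simp only [mem_union, mem_inter, mem_sdiff]; tauto
        have h2 : B' = (B' ∩ X) ∪ (B' \ X) := by
          ext x; simp only [mem_union, mem_inter, mem_sdiff]; tauto
        rw [h1, h2, heq.1, heq.2]
    rw [card_product, card_powersetCard, card_powersetCard, hXcard, hYcard] at this
    exact this
  -- remainder part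
  · set Tgt := T.filter fun B => ¬ (B ∩ X).card = t + 1 - ℓ with hTgt
    have hfib : Tgt.card = ∑ P ∈ X.powerset, (Tgt.filter fun B => B ∩ X = P).card := by
      apply Finset.card_eq_sum_card_fiberwise
      intro B _
      exact Finset.mem_powerset.mpr inter_subset_right
    rw [hfib]
    have hbound : ∀ P ∈ X.powerset,
        (Tgt.filter fun B => B ∩ X = P).card ≤ Nat.choose (n - t - 2) (k - t - 2) := by
      intro P hP
      by_cases hne : (Tgt.filter fun B => B ∩ X = P).Nonempty
      · obtain ⟨B0, hB0⟩ := hne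
        rw [mem_filter, hTgt, mem_filter, hT, mem_filter, mem_powersetCard] at hB0
        obtain ⟨⟨⟨⟨hB0sub, hB0card⟩, hB0ge⟩, hB0ne⟩, hB0P⟩ := hB0
        have hPcard : t + 2 - ℓ ≤ P.card := by rw [← hB0P]; omega
        have hPk : P.card ≤ k - ℓ := by
          rw [← hB0P, ← hB0card]; exact card_le_card inter_subset_left
        have step : (Tgt.filter fun B => B ∩ X = P).card ≤
            ((Finset.Icc (t + 3) n).powersetCard (k - ℓ - P.card)).card := by
          apply Finset.card_le_card_of_injOn (fun B => B \ X)
          · intro B hB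
            rw [mem_coe, mem_filter, hTgt, mem_filter, hT, mem_filter, mem_powersetCard] at hB
            obtain ⟨⟨⟨⟨hBsub, hBcard⟩, -⟩, -⟩, hBP⟩ := hB
            rw [mem_coe, mem_powersetCard]
            constructor
            · intro x hx
              rw [mem_sdiff] at hx
              have h1 := hBsub hx.1
              rw [mem_Icc] at h1 ⊢
              have h2 : x ∉ Finset.Icc 1 (t + 2) := hx.2
              rw [mem_Icc] at h2
              omega
            · have h3 := card_sdiff_add_card_inter B X
              rw [hBP] at h3
              beta_reduce
              omega
          · intro B hB B' hB' heq
            simp only at heq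
            rw [mem_coe, mem_filter] at hB hB'
            have h1 : B = (B ∩ X) ∪ (B \ X) := by
              ext x; simp only [mem_union, mem_inter, mem_sdiff]; tauto
            have h2 : B' = (B' ∩ X) ∪ (B' \ X) := by
              ext x; simp only [mem_union, mem_inter, mem_sdiff]; tauto
            rw [h1, h2, hB.2, hB'.2, heq]
        rw [card_powersetCard, hYcard] at step
        refine step.trans ?_
        exact choose_mono_half (n - t - 2) (k - t - 2) (k - ℓ - P.card) (by omega) hn
      · rw [Finset.not_nonempty_iff_eq_empty] at hne
        rw [hne]
        simp
    calc ∑ P ∈ X.powerset, (Tgt.filter fun B => B ∩ X = P).card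
        ≤ ∑ _P ∈ X.powerset, Nat.choose (n - t - 2) (k - t - 2) :=
          Finset.sum_le_sum hbound
      _ = 2 ^ (t + 2) * Nat.choose (n - t - 2) (k - t - 2) := by
          rw [Finset.sum_const, card_powerset, hXcard, smul_eq_mul]

theorem stmt13 (k t ℓ : ℕ) (ht : 1 ≤ t) (hk : 2 * t + 2 ≤ k) (hℓ1 : 1 ≤ ℓ) (hℓt : ℓ < t) :
    ∃ N : ℕ, ∀ n ≥ N, ∀ G : Finset (Finset ℕ),
      IsInitSeg (EM n k t t) G (EM n k (t + 2) (t + 1)).card →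
      (Finset.shadow^[ℓ] (EM n k (t + 2) (t + 1))).card < (Finset.shadow^[ℓ] G).card := by
  refine ⟨2 ^ (t + 2) * k + 4 * k + t + 3, fun n hn G hG => ?_⟩
  obtain ⟨hGsub, hGcard, -⟩ := hG
  have hP : 1 ≤ 2 ^ (t + 2) := Nat.one_le_two_pow
  set M := n - t - 2 with hM
  set r := k - t - 1 with hr
  have hrM : 2 ^ (t + 2) * r + r ≤ M := by
    have : r ≤ k := by omega
    have h2 : 2 ^ (t + 2) * r ≤ 2 ^ (t + 2) * k := Nat.mul_le_mul_left _ this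
    omega
  -- members of G are k-sets containing [t]
  have hGmem : ∀ A ∈ G, A.card = k ∧ Finset.Icc 1 t ⊆ A := by
    intro A hA
    have h1 := hGsub hA
    rw [EM, mem_filter, mem_powersetCard] at h1
    obtain ⟨⟨hAsub, hAcard⟩, hAint⟩ := h1
    refine ⟨hAcard, ?_⟩
    have h2 : A ∩ Finset.Icc 1 t ⊆ Finset.Icc 1 t := inter_subset_right
    have h3 : (Finset.Icc 1 t).card = t := by rw [Nat.card_Icc]; omega
    have h4 : A ∩ Finset.Icc 1 t = Finset.Icc 1 t :=
      Finset.eq_of_subset_of_card_le h2 (by omega)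
    rw [← h4]
    exact inter_subset_left
  -- lower bound on shadow of G
  have hlow : (EM n k (t + 2) (t + 1)).card * Nat.choose t ℓ ≤ (Finset.shadow^[ℓ] G).card := by
    rw [← hGcard]
    exact shadow_lower k t ℓ (by omega) (by omega) G hGmem
  -- lower bound on m
  have hm : (t + 2) * Nat.choose M r ≤ (EM n k (t + 2) (t + 1)).card :=
    m_lower n k t (by omega) (by omega) (by omega)
  -- upper bound on shadow of EM
  have hup := shadow_upper n k t ℓ (by omega) (by omega) hk (by omega)
  -- coefficient inequality
  have hc : Nat.choose (t + 2) (t + 1 - ℓ) < (t + 2) * Nat.choose t ℓ := by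
    have h1 : t + 1 - ℓ = t + 2 - (ℓ + 1) := by omega
    rw [h1, Nat.choose_symm (by omega)]
    exact coeff_lt t ℓ hℓ1 hℓt
  -- the error term is small: 2^(t+2) * C(M, r-1) < C(M, r)
  have herr : 2 ^ (t + 2) * Nat.choose M (k - t - 2) < Nat.choose M r := by
    have hrpos : 1 ≤ r := by omega
    have hid : Nat.choose M r * r = Nat.choose M (k - t - 2) * (M - (k - t - 2)) := by
      have h0 : r = (k - t - 2) + 1 := by omega
      rw [h0]
      exact Nat.choose_succ_right_eq M (k - t - 2)
    have hcpos : 0 < Nat.choose M (k - t - 2) := Nat.choose_pos (by omega)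
    have hkey : 2 ^ (t + 2) * r < M - (k - t - 2) := by omega
    have h1 : 2 ^ (t + 2) * Nat.choose M (k - t - 2) * r
        < Nat.choose M (k - t - 2) * (M - (k - t - 2)) := by
      calc 2 ^ (t + 2) * Nat.choose M (k - t - 2) * r
          = Nat.choose M (k - t - 2) * (2 ^ (t + 2) * r) := by ring
        _ < Nat.choose M (k - t - 2) * (M - (k - t - 2)) :=
            mul_lt_mul_of_pos_left hkey hcpos
    rw [← hid] at h1
    exact Nat.lt_of_mul_lt_mul_right h1
  -- combine
  have hfinal : Nat.choose (t + 2) (t + 1 - ℓ) * Nat.choose M r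
      + 2 ^ (t + 2) * Nat.choose M (k - t - 2)
      < (t + 2) * Nat.choose t ℓ * Nat.choose M r := by
    have h1 : (Nat.choose (t + 2) (t + 1 - ℓ) + 1) * Nat.choose M r
        ≤ (t + 2) * Nat.choose t ℓ * Nat.choose M r :=
      Nat.mul_le_mul_right _ (by omega)
    nlinarith [Nat.choose_pos (show r ≤ M by omega)]
  calc (Finset.shadow^[ℓ] (EM n k (t + 2) (t + 1))).card
      ≤ Nat.choose (t + 2) (t + 1 - ℓ) * Nat.choose M r
        + 2 ^ (t + 2) * Nat.choose M (k - t - 2) := hup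
    _ < (t + 2) * Nat.choose t ℓ * Nat.choose M r := hfinal
    _ = (t + 2) * Nat.choose M r * Nat.choose t ℓ := by ring
    _ ≤ (EM n k (t + 2) (t + 1)).card * Nat.choose t ℓ := Nat.mul_le_mul_right _ hm
    _ ≤ (Finset.shadow^[ℓ] G).card := hlow
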